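/- Let τ ∈ ℂ with |τ| = 1, let α ∈ ℝ^d_≥, let F : ℝ^d_≥ → ℝ^d be C¹ point-symmetric at α, and let m ≠ n. Then the Gateaux derivative of 𝓛_F at Λ_α in the direction of the Hermitian matrix τE_{m,n} + τ̄E_{n,m} exists and equals [F,α] ∘ (τE_{m,n} + τ̄E_{n,m}), where ∘ denotes Hadamard multiplication and E_{m,n} is the matrix with a 1 in entry (m,n) and zeros elsewhere. -/

import Mathlib

open Matrix Filter

attribute [local instance] Matrix.frobeniusNormedAddCommGroup Matrix.frobeniusNormedSpace

namespace LFGateauxAux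

variable {d : ℕ}

lemma sum_single (i : Fin d) (f : Fin d → ℂ) (hf : ∀ k, k ≠ i → f k = 0) :
    ∑ k, f k = f i :=
  Finset.sum_eq_single_of_mem i (Finset.mem_univ i) fun b _ hb => hf b hb

lemma sum_double {m n : Fin d} (hmn : m ≠ n) (f : Fin d → ℂ)
    (hf : ∀ k, k ≠ m → k ≠ n → f k = 0) : ∑ k, f k = f m + f n := by
  have h : ∑ k ∈ ({m, n} : Finset (Fin d)), f k = ∑ k, f k :=
    Finset.sum_subset (Finset.subset_univ _) (by
      intro k _ hk
      simp only [Finset.mem_insert, Finset.mem_singleton] at hk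
      push_neg at hk
      exact hf k hk.1 hk.2)
  rw [← h, Finset.sum_pair hmn]

/-- The essentially `2 × 2` "rotation" unitary. -/
noncomputable def Vmat (m n : Fin d) (τ : ℂ) (c t : ℝ) : Matrix (Fin d) (Fin d) ℂ :=
  Matrix.of fun i j =>
    if i = m then (if j = m then (c : ℂ) else if j = n then (-t : ℂ) else 0)
    else if i = n then
      (if j = m then (starRingEnd ℂ) τ * t else if j = n then (starRingEnd ℂ) τ * c else 0)
    else if j = i then 1 else 0

/-- Its conjugate transpose. -/
noncomputable def Wmat (m n : Fin d) (τ : ℂ) (c t : ℝ) : Matrix (Fin d) (Fin d) ℂ :=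
  Matrix.of fun i j =>
    if j = m then (if i = m then (c : ℂ) else if i = n then (-t : ℂ) else 0)
    else if j = n then (if i = m then τ * t else if i = n then τ * c else 0)
    else if j = i then 1 else 0

lemma star_Vmat {m n : Fin d} (hmn : m ≠ n) (τ : ℂ) (c t : ℝ) :
    star (Vmat m n τ c t) = Wmat m n τ c t := by
  ext i j
  simp only [Matrix.star_apply, Vmat, Wmat, Matrix.of_apply]
  by_cases hj : j = m <;> by_cases hj' : j = n <;> by_cases hi : i = m <;> by_cases hi' : i = n <;>
    simp_all [Complex.conj_ofReal, eq_comm]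

lemma prodForm {m n : Fin d} (hmn : m ≠ n) {τ : ℂ} (hτ1 : (starRingEnd ℂ) τ * τ = 1)
    (c t : ℝ) (w : Fin d → ℂ) :
    Vmat m n τ c t * Matrix.diagonal w * Wmat m n τ c t =
    Matrix.of (fun i j =>
      if i = m ∧ j = m then (c : ℂ) ^ 2 * w m + (t : ℂ) ^ 2 * w n
      else if i = m ∧ j = n then τ * (c * t) * (w m - w n)
      else if i = n ∧ j = m then (starRingEnd ℂ) τ * (c * t) * (w m - w n)
      else if i = n ∧ j = n then (t : ℂ) ^ 2 * w m + (c : ℂ) ^ 2 * w n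
      else if i = j then w i else 0) := by
  have hnm : n ≠ m := hmn.symm
  ext i j
  rw [Matrix.mul_apply]
  simp only [Matrix.mul_diagonal, Matrix.of_apply]
  by_cases hi : i = m
  · rw [sum_double hmn _ (fun k hk1 hk2 => by simp [Vmat, hi, hk1, hk2])]
    by_cases hj : j = m
    · simp [Vmat, Wmat, hi, hj, hmn, hnm]
      ring
    · by_cases hj' : j = n
      · simp [Vmat, Wmat, hi, hj, hj', hmn, hnm]
        ring
      · simp [Vmat, Wmat, hi, hj, hj', hmn, hnm, Ne.symm hmn]
        exact fun h => absurd h.symm hj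
  · by_cases hi' : i = n
    · rw [sum_double hmn _ (fun k hk1 hk2 => by simp [Vmat, hi, hi', hk1, hk2])]
      by_cases hj : j = m
      · simp [Vmat, Wmat, hi, hi', hj, hmn, hnm]
        ring
      · by_cases hj' : j = n
        · simp [Vmat, Wmat, hi, hi', hj, hj', hmn, hnm]
          linear_combination ((t : ℂ) ^ 2 * w m + (c : ℂ) ^ 2 * w n) * hτ1
        · simp [Vmat, Wmat, hi, hi', hj, hj', hmn, hnm]
          exact fun h => absurd h.symm hj'
    · rw [sum_single i _ (fun k hk => by simp [Vmat, hi, hi', hk])]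
      by_cases hj : j = m
      · simp [Vmat, Wmat, hi, hi', hj, hmn, hnm]
      · by_cases hj' : j = n
        · simp [Vmat, Wmat, hi, hi', hj, hj', hmn, hnm]
        · by_cases hij : i = j
          · simp [Vmat, Wmat, hi, hi', hj, hj', hij, hmn, hnm]
          · simp [Vmat, Wmat, hi, hi', hj, hj', hij, Ne.symm hij, hmn, hnm]

lemma Vmat_unitary {m n : Fin d} (hmn : m ≠ n) {τ : ℂ} (hτ1 : (starRingEnd ℂ) τ * τ = 1)
    (c t : ℝ) (hct : c ^ 2 + t ^ 2 = 1) :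
    Vmat m n τ c t ∈ Matrix.unitaryGroup (Fin d) ℂ := by
  rw [Matrix.mem_unitaryGroup_iff, star_Vmat hmn]
  have h := prodForm hmn hτ1 c t (fun _ => (1 : ℂ))
  rw [show Matrix.diagonal (fun _ : Fin d => (1 : ℂ)) = 1 from Matrix.diagonal_one,
    Matrix.mul_one] at h
  rw [h]
  ext i j
  simp only [Matrix.of_apply, Matrix.one_apply]
  have hc : ((c : ℂ) ^ 2 + (t : ℂ) ^ 2) = 1 := by
    have := congrArg (fun x : ℝ => (x : ℂ)) hct
    push_cast at this
    simpa using this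
  by_cases hi : i = m <;> by_cases hi' : i = n <;> by_cases hj : j = m <;> by_cases hj' : j = n <;>
    by_cases hij : i = j <;>
    simp_all <;> linear_combination hc

/-- Permutation matrix (with columns indexed by the source). -/
noncomputable def Pmat (σ : Equiv.Perm (Fin d)) : Matrix (Fin d) (Fin d) ℂ :=
  Matrix.of fun i j => if σ j = i then 1 else 0

lemma Pmat_diag (σ : Equiv.Perm (Fin d)) (v : Fin d → ℂ) :
    Pmat σ * Matrix.diagonal (fun i => v (σ i)) * star (Pmat σ) = Matrix.diagonal v := by
  ext i j
  rw [Matrix.mul_apply]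
  simp only [Matrix.mul_diagonal, Matrix.star_apply, Pmat, Matrix.of_apply]
  rw [sum_single (σ.symm i) _ (fun k hk => by
    have h1 : σ k ≠ i := fun hc => hk (by rw [← hc, Equiv.symm_apply_apply])
    simp [h1])]
  simp only [Equiv.apply_symm_apply, if_pos rfl, one_mul]
  by_cases hij : i = j
  · simp [hij, Matrix.diagonal_apply_eq]
  · simp [hij, Matrix.diagonal_apply_ne _ hij]

lemma Pmat_unitary (σ : Equiv.Perm (Fin d)) : Pmat σ ∈ Matrix.unitaryGroup (Fin d) ℂ := by
  rw [Matrix.mem_unitaryGroup_iff]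
  ext i j
  rw [Matrix.mul_apply]
  simp only [Matrix.star_apply, Pmat, Matrix.of_apply]
  rw [sum_single (σ.symm i) _ (fun k hk => by
    have h1 : σ k ≠ i := fun hc => hk (by rw [← hc, Equiv.symm_apply_apply])
    simp [h1])]
  simp only [Equiv.apply_symm_apply, if_pos rfl, one_mul]
  by_cases hij : i = j
  · simp [hij, Matrix.one_apply]
  · simp [hij, Matrix.one_apply]

lemma exists_antitone_sort (ξ : Fin d → ℝ) :
    ∃ σ : Equiv.Perm (Fin d), Antitone (ξ ∘ σ) := by
  refine ⟨Tuple.sort (fun i => -ξ i), ?_⟩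
  have h := Tuple.monotone_sort (fun i => -ξ i)
  intro x y hxy
  have := h hxy
  simp only [Function.comp_apply] at this ⊢
  linarith

lemma diag_eq_sum (v : Fin d → ℂ) :
    Matrix.diagonal v = ∑ k, v k • Matrix.single k k (1 : ℂ) := by
  ext i j
  rw [Matrix.sum_apply]
  rw [sum_single i _ (fun k hk => by simp [Matrix.single, hk])]
  by_cases hij : i = j
  · simp [← hij, Matrix.single]
  · simp [Matrix.diagonal_apply_ne _ hij, Matrix.single, hij]


set_option maxHeartbeats 1000000 in
lemma LFdec {d : ℕ}
    (F Fext : (Fin d → ℝ) → Fin d → ℝ)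
    (LF : Matrix (Fin d) (Fin d) ℂ → Matrix (Fin d) (Fin d) ℂ)
    (hFeq : ∀ ξ : Fin d → ℝ, Antitone ξ → F ξ = Fext ξ)
    (hsym : ∀ (x : Fin d → ℝ) (σ : Equiv.Perm (Fin d)), Fext (x ∘ σ) = Fext x ∘ σ)
    (hLF : ∀ (B V : Matrix (Fin d) (Fin d) ℂ) (ξ : Fin d → ℝ),
      V ∈ Matrix.unitaryGroup (Fin d) ℂ → Antitone ξ →
      B = V * Matrix.diagonal (fun i => (ξ i : ℂ)) * star V →
      LF B = V * Matrix.diagonal (fun i => (F ξ i : ℂ)) * star V)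
    (V : Matrix (Fin d) (Fin d) ℂ) (hV : V ∈ Matrix.unitaryGroup (Fin d) ℂ)
    (ξ : Fin d → ℝ) :
    LF (V * Matrix.diagonal (fun i => (ξ i : ℂ)) * star V)
      = V * Matrix.diagonal (fun i => (Fext ξ i : ℂ)) * star V := by
  obtain ⟨σ, hσ⟩ := exists_antitone_sort ξ
  have hP := Pmat_unitary (d := d) σ
  have hPd : Pmat σ * Matrix.diagonal (fun i => (ξ (σ i) : ℂ)) * star (Pmat σ)
      = Matrix.diagonal (fun i => (ξ i : ℂ)) := Pmat_diag σ (fun i => (ξ i : ℂ))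
  have hB : V * Matrix.diagonal (fun i => (ξ i : ℂ)) * star V
      = (V * Pmat σ) * Matrix.diagonal (fun i => ((ξ ∘ σ) i : ℂ)) * star (V * Pmat σ) := by
    rw [Matrix.star_mul, ← hPd]
    simp only [Matrix.mul_assoc, Function.comp_apply]
  have hLF2 := hLF _ (V * Pmat σ) (ξ ∘ σ) (mul_mem hV hP) hσ hB
  rw [hLF2, hFeq _ hσ, hsym ξ σ]
  have hPd2 : Pmat σ * Matrix.diagonal (fun i => (Fext ξ (σ i) : ℂ)) * star (Pmat σ)
      = Matrix.diagonal (fun i => (Fext ξ i : ℂ)) := Pmat_diag σ (fun i => (Fext ξ i : ℂ))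
  rw [Matrix.star_mul, ← hPd2]
  simp only [Matrix.mul_assoc, Function.comp_apply]

set_option maxHeartbeats 2000000 in
lemma keyLemma {d : ℕ}
    (F Fext : (Fin d → ℝ) → Fin d → ℝ) (α : Fin d → ℝ)
    (LF : Matrix (Fin d) (Fin d) ℂ → Matrix (Fin d) (Fin d) ℂ)
    (D : (Fin d → ℝ) →L[ℝ] (Fin d → ℝ))
    (τ : ℂ) (hτ1 : (starRingEnd ℂ) τ * τ = 1) (m n : Fin d) (hmn : m ≠ n)
    (hα : Antitone α)
    (hFext : ∀ x : Fin d → ℝ, ∃ σ : Equiv.Perm (Fin d),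
      Antitone (x ∘ σ) ∧ Fext x = F (x ∘ σ) ∘ σ.symm)
    (hsym : ∀ (x : Fin d → ℝ) (σ : Equiv.Perm (Fin d)), Fext (x ∘ σ) = Fext x ∘ σ)
    (hD : HasFDerivAt Fext D α)
    (hLF : ∀ (B V : Matrix (Fin d) (Fin d) ℂ) (ξ : Fin d → ℝ),
      V ∈ Matrix.unitaryGroup (Fin d) ℂ → Antitone ξ →
      B = V * Matrix.diagonal (fun i => (ξ i : ℂ)) * star V →
      LF B = V * Matrix.diagonal (fun i => (F ξ i : ℂ)) * star V)
    (c t : ℝ → ℝ) (c' t' : ℝ) (Ξ : ℝ → Fin d → ℝ) (Ξd : Fin d → ℝ)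
    (hΞ0 : Ξ 0 = α)
    (hdΞ : HasDerivAt Ξ Ξd 0)
    (hdc : HasDerivAt c c' 0) (hdt : HasDerivAt t t' 0)
    (hI : ∀ h, c h ^ 2 * Ξ h m + t h ^ 2 * Ξ h n = α m)
    (hII : ∀ h, t h ^ 2 * Ξ h m + c h ^ 2 * Ξ h n = α n)
    (hIII : ∀ h, c h * t h * (Ξ h m - Ξ h n) = h)
    (hIV : ∀ h, c h ^ 2 + t h ^ 2 = 1)
    (hΞk : ∀ (h : ℝ) k, k ≠ m → k ≠ n → Ξ h k = α k)
    (T : Matrix (Fin d) (Fin d) ℂ)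
    (hT : T = (τ * (((c' * t 0 + c 0 * t') * (F α m - F α n)
            + c 0 * t 0 * (D Ξd m - D Ξd n) : ℝ) : ℂ)) • Matrix.single m n (1 : ℂ)
        + ((starRingEnd ℂ) τ * (((c' * t 0 + c 0 * t') * (F α m - F α n)
            + c 0 * t 0 * (D Ξd m - D Ξd n) : ℝ) : ℂ)) • Matrix.single n m (1 : ℂ)
        + Matrix.diagonal (fun k =>
            ((if k = m then 2 * c 0 * c' * F α m + 2 * t 0 * t' * F α n
                + c 0 ^ 2 * D Ξd m + t 0 ^ 2 * D Ξd n
              else if k = n then 2 * t 0 * t' * F α m + 2 * c 0 * c' * F α n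
                + t 0 ^ 2 * D Ξd m + c 0 ^ 2 * D Ξd n
              else D Ξd k : ℝ) : ℂ))) :
    Tendsto
      (fun h : ℝ => (h : ℂ)⁻¹ •
        (LF (Matrix.diagonal (fun i => (α i : ℂ))
              + h • (τ • Matrix.single m n (1 : ℂ)
                    + (starRingEnd ℂ) τ • Matrix.single n m (1 : ℂ)))
          - LF (Matrix.diagonal (fun i => (α i : ℂ)))))
      (nhdsWithin (0 : ℝ) {0}ᶜ)
      (nhds T) := by
  classical
  -- F agrees with Fext on antitone tuples
  have hFeq : ∀ ξ : Fin d → ℝ, Antitone ξ → F ξ = Fext ξ := by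
    intro ξ hξ
    obtain ⟨σ, hσ1, hσ2⟩ := hFext ξ
    have hfix : ξ ∘ σ = ξ := by
      have hm1 : Monotone ((fun i => -ξ i) ∘ σ) := fun x y hxy => by
        simp only [Function.comp_apply]
        have := hσ1 hxy
        simp only [Function.comp_apply] at this
        linarith
      have hm2 : Monotone ((fun i => -ξ i) ∘ ⇑(1 : Equiv.Perm (Fin d))) := fun x y hxy => by
        simp only [Function.comp_apply, Equiv.Perm.coe_one, id_eq]
        have := hξ hxy
        linarith
      have h3 := Tuple.unique_monotone hm1 hm2
      funext i
      have h4 := congrFun h3 i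
      simp only [Function.comp_apply, Equiv.Perm.coe_one, id_eq] at h4
      have h5 : -ξ (σ i) = -ξ i := h4
      show ξ (σ i) = ξ i
      linarith
    rw [hfix] at hσ2
    have h4 := hsym ξ σ
    rw [hfix] at h4
    funext j
    have h5 : F ξ j = Fext ξ (σ j) := by
      rw [hσ2]
      simp only [Function.comp_apply, Equiv.symm_apply_apply]
    exact h5.trans (congrFun h4 j).symm
  have hLFdec : ∀ V : Matrix (Fin d) (Fin d) ℂ, V ∈ Matrix.unitaryGroup (Fin d) ℂ →
      ∀ ξ : Fin d → ℝ,
      LF (V * Matrix.diagonal (fun i => (ξ i : ℂ)) * star V)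
        = V * Matrix.diagonal (fun i => (Fext ξ i : ℂ)) * star V :=
    fun V hV ξ => LFdec F Fext LF hFeq hsym hLF V hV ξ
  -- coordinates of `Fext ∘ Ξ` have derivatives
  have hw : ∀ k, HasDerivAt (fun h => Fext (Ξ h) k) (D Ξd k) 0 := by
    intro k
    have hD' : HasFDerivAt Fext D (Ξ 0) := by rw [hΞ0]; exact hD
    exact hasDerivAt_pi.1 (hD'.comp_hasDerivAt 0 hdΞ) k
  have hw0 : ∀ k, Fext (Ξ 0) k = F α k := by
    intro k
    rw [hΞ0, ← hFeq α hα]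
  -- scalar derivative for the off-diagonal coefficient
  have hf3R : HasDerivAt (fun h => c h * t h * (Fext (Ξ h) m - Fext (Ξ h) n))
      ((c' * t 0 + c 0 * t') * (F α m - F α n)
        + c 0 * t 0 * (D Ξd m - D Ξd n)) 0 := by
    have h1 := (hdc.mul hdt).mul ((hw m).sub (hw n))
    simp only [Pi.sub_apply, Pi.mul_apply, hw0] at h1
    exact h1
  -- scalar derivatives for the diagonal coefficients
  have hgR : ∀ k, HasDerivAt (fun h =>
      (if k = m then c h ^ 2 * Fext (Ξ h) m + t h ^ 2 * Fext (Ξ h) n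
       else if k = n then t h ^ 2 * Fext (Ξ h) m + c h ^ 2 * Fext (Ξ h) n
       else Fext (Ξ h) k))
      (if k = m then 2 * c 0 * c' * F α m + 2 * t 0 * t' * F α n
          + c 0 ^ 2 * D Ξd m + t 0 ^ 2 * D Ξd n
        else if k = n then 2 * t 0 * t' * F α m + 2 * c 0 * c' * F α n
          + t 0 ^ 2 * D Ξd m + c 0 ^ 2 * D Ξd n
        else D Ξd k) 0 := by
    intro k
    by_cases hk : k = m
    · simp only [if_pos hk]
      have h1 := ((hdc.pow 2).mul (hw m)).add ((hdt.pow 2).mul (hw n))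
      rw [hw0 m, hw0 n] at h1
      refine h1.congr_deriv ?_
      norm_num [Pi.pow_apply]
      ring
    · by_cases hk' : k = n
      · simp only [if_neg hk, if_pos hk']
        have h1 := ((hdt.pow 2).mul (hw m)).add ((hdc.pow 2).mul (hw n))
        rw [hw0 m, hw0 n] at h1
        refine h1.congr_deriv ?_
        norm_num [Pi.pow_apply]
        try push_cast
        try ring
      · simp only [if_neg hk, if_neg hk']
        exact hw k
  -- derivative of the model function `S`
  have hS : HasDerivAt (fun h : ℝ =>
      (τ * ((c h * t h * (Fext (Ξ h) m - Fext (Ξ h) n) : ℝ) : ℂ))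
          • Matrix.single m n (1 : ℂ)
      + ((starRingEnd ℂ) τ * ((c h * t h * (Fext (Ξ h) m - Fext (Ξ h) n) : ℝ) : ℂ))
          • Matrix.single n m (1 : ℂ)
      + Matrix.diagonal (fun k =>
          ((if k = m then c h ^ 2 * Fext (Ξ h) m + t h ^ 2 * Fext (Ξ h) n
            else if k = n then t h ^ 2 * Fext (Ξ h) m + c h ^ 2 * Fext (Ξ h) n
            else Fext (Ξ h) k : ℝ) : ℂ))) T 0 := by
    rw [hT]
    refine HasDerivAt.add (HasDerivAt.add ?_ ?_) ?_
    · exact ((hf3R.ofReal_comp).const_mul τ).smul_const _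
    · exact ((hf3R.ofReal_comp).const_mul _).smul_const _
    · simp only [diag_eq_sum]
      exact HasDerivAt.fun_sum (fun k _ => (((hgR k).ofReal_comp).smul_const _))
  -- `LF` along the curve equals the model function `S`
  have hstep : ∀ h : ℝ,
      LF (Matrix.diagonal (fun i => (α i : ℂ))
          + h • (τ • Matrix.single m n (1 : ℂ)
                + (starRingEnd ℂ) τ • Matrix.single n m (1 : ℂ)))
        = (τ * ((c h * t h * (Fext (Ξ h) m - Fext (Ξ h) n) : ℝ) : ℂ))
              • Matrix.single m n (1 : ℂ)
          + ((starRingEnd ℂ) τ * ((c h * t h * (Fext (Ξ h) m - Fext (Ξ h) n) : ℝ) : ℂ))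
              • Matrix.single n m (1 : ℂ)
          + Matrix.diagonal (fun k =>
              ((if k = m then c h ^ 2 * Fext (Ξ h) m + t h ^ 2 * Fext (Ξ h) n
                else if k = n then t h ^ 2 * Fext (Ξ h) m + c h ^ 2 * Fext (Ξ h) n
                else Fext (Ξ h) k : ℝ) : ℂ)) := by
    intro h
    have hIc : (c h : ℂ) ^ 2 * (Ξ h m : ℂ) + (t h : ℂ) ^ 2 * (Ξ h n : ℂ) = ((α m : ℝ) : ℂ) := by
      exact_mod_cast congrArg (fun x : ℝ => (x : ℂ)) (hI h)
    have hIIc : (t h : ℂ) ^ 2 * (Ξ h m : ℂ) + (c h : ℂ) ^ 2 * (Ξ h n : ℂ) = ((α n : ℝ) : ℂ) := by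
      exact_mod_cast congrArg (fun x : ℝ => (x : ℂ)) (hII h)
    have hIIIc : (c h : ℂ) * (t h : ℂ) * ((Ξ h m : ℂ) - (Ξ h n : ℂ)) = ((h : ℝ) : ℂ) := by
      exact_mod_cast congrArg (fun x : ℝ => (x : ℂ)) (hIII h)
    have e1 : Matrix.diagonal (fun i => (α i : ℂ))
          + h • (τ • Matrix.single m n (1 : ℂ)
                + (starRingEnd ℂ) τ • Matrix.single n m (1 : ℂ))
        = Vmat m n τ (c h) (t h) * Matrix.diagonal (fun i => (Ξ h i : ℂ))
            * star (Vmat m n τ (c h) (t h)) := by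
      rw [star_Vmat hmn, prodForm hmn hτ1]
      ext i j
      simp only [Matrix.of_apply, Matrix.add_apply, Matrix.smul_apply, Matrix.single,
        Matrix.diagonal_apply, Complex.real_smul, smul_eq_mul]
      by_cases hi : i = m
      · by_cases hj : j = m
        · simp [hi, hj, hmn, Ne.symm hmn]
          linear_combination - hIc
        · by_cases hj' : j = n
          · simp [hi, hj, hj', hmn, Ne.symm hmn]
            linear_combination (-τ) * hIIIc
          · simp [hi, hj, hj', hmn, Ne.symm hmn, Ne.symm hj, Ne.symm hj']
      · by_cases hi' : i = n
        · by_cases hj : j = m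
          · simp [hi, hi', hj, hmn, Ne.symm hmn]
            linear_combination (-((starRingEnd ℂ) τ)) * hIIIc
          · by_cases hj' : j = n
            · simp [hi, hi', hj, hj', hmn, Ne.symm hmn]
              linear_combination - hIIc
            · simp [hi, hi', hj, hj', hmn, Ne.symm hmn, Ne.symm hj, Ne.symm hj']
        · by_cases hij : i = j
          · have hjm : ¬ j = m := fun hh => hi (hij.trans hh)
            have hjn : ¬ j = n := fun hh => hi' (hij.trans hh)
            simp [hij, hjm, hjn, Ne.symm hjm, Ne.symm hjn, hΞk h j hjm hjn]
          · simp [hi, hi', hij, Ne.symm hi, Ne.symm hi', Ne.symm hij]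
    rw [e1, hLFdec (Vmat m n τ (c h) (t h))
        (Vmat_unitary hmn hτ1 (c h) (t h) (hIV h)) (Ξ h),
      star_Vmat hmn, prodForm hmn hτ1]
    ext i j
    simp only [Matrix.of_apply, Matrix.add_apply, Matrix.smul_apply, Matrix.single,
      Matrix.diagonal_apply, smul_eq_mul]
    by_cases hi : i = m
    · by_cases hj : j = m
      · simp [hi, hj, hmn, Ne.symm hmn]
        try push_cast
        try ring
      · by_cases hj' : j = n
        · simp [hi, hj, hj', hmn, Ne.symm hmn]
          try push_cast
          try ring
        · simp [hi, hj, hj', hmn, Ne.symm hmn, Ne.symm hj, Ne.symm hj']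
    · by_cases hi' : i = n
      · by_cases hj : j = m
        · simp [hi, hi', hj, hmn, Ne.symm hmn]
          try push_cast
          try ring
        · by_cases hj' : j = n
          · simp [hi, hi', hj, hj', hmn, Ne.symm hmn]
            try push_cast
            try ring
          · simp [hi, hi', hj, hj', hmn, Ne.symm hmn, Ne.symm hj, Ne.symm hj']
      · by_cases hij : i = j
        · have hjm : ¬ j = m := fun hh => hi (hij.trans hh)
          have hjn : ¬ j = n := fun hh => hi' (hij.trans hh)
          simp [hij, hjm, hjn, Ne.symm hjm, Ne.symm hjn]
        · simp [hi, hi', hij, Ne.symm hi, Ne.symm hi', Ne.symm hij]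
  -- conclude
  have h00 : LF (Matrix.diagonal (fun i => (α i : ℂ)))
      = (τ * ((c 0 * t 0 * (Fext (Ξ 0) m - Fext (Ξ 0) n) : ℝ) : ℂ))
            • Matrix.single m n (1 : ℂ)
        + ((starRingEnd ℂ) τ * ((c 0 * t 0 * (Fext (Ξ 0) m - Fext (Ξ 0) n) : ℝ) : ℂ))
            • Matrix.single n m (1 : ℂ)
        + Matrix.diagonal (fun k =>
            ((if k = m then c 0 ^ 2 * Fext (Ξ 0) m + t 0 ^ 2 * Fext (Ξ 0) n
              else if k = n then t 0 ^ 2 * Fext (Ξ 0) m + c 0 ^ 2 * Fext (Ξ 0) n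
              else Fext (Ξ 0) k : ℝ) : ℂ)) := by
    have h1 := hstep 0
    rwa [zero_smul, add_zero] at h1
  replace hS := hasDerivAt_iff_tendsto_slope.mp hS
  refine Tendsto.congr' ?_ hS
  filter_upwards [self_mem_nhdsWithin] with h hh
  rw [slope_def_module, sub_zero, hstep h, h00]
  ext i j
  simp only [Matrix.smul_apply, Matrix.sub_apply, Complex.real_smul, smul_eq_mul]
  push_cast
  ring

end LFGateauxAux

open LFGateauxAux

/-- The matrix `[F,α]` of generalized divided differences, where `D` is the
derivative of the extension `F^ext` at `α`, so that
`D (Pi.single n 1) m = ∂ₙ F^ext_m (α)`. -/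
noncomputable def bracket {d : ℕ} (F : (Fin d → ℝ) → Fin d → ℝ)
    (D : (Fin d → ℝ) →L[ℝ] (Fin d → ℝ)) (α : Fin d → ℝ) (m n : Fin d) : ℝ :=
  if α m = α n then
    if m = n then D (Pi.single m 1) m
    else D (Pi.single m 1) m - D (Pi.single m 1) n
  else (F α m - F α n) / (α m - α n)

set_option maxHeartbeats 4000000 in
/-- **Lemma (off-diagonal Gateaux derivatives of `𝓛_F`).**
Let `τ ∈ ℂ` with `|τ| = 1`, let `F : ℝ^d_≥ → ℝ^d` be C¹ point-symmetric at
`α ∈ ℝ^d_≥` (with `F^ext` having derivative `D` at `α`), and let `m ≠ n`.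
Then the Gateaux derivative of `𝓛_F` at `Λ_α` in the direction of the
Hermitian matrix `τ E_{m,n} + τ̄ E_{n,m}` exists and equals
`[F,α] ∘ (τ E_{m,n} + τ̄ E_{n,m})` (Hadamard product). -/
theorem LF_gateaux_offdiagonal {d : ℕ}
    (F Fext : (Fin d → ℝ) → Fin d → ℝ) (α : Fin d → ℝ)
    (LF : Matrix (Fin d) (Fin d) ℂ → Matrix (Fin d) (Fin d) ℂ)
    (D : (Fin d → ℝ) →L[ℝ] (Fin d → ℝ))
    (τ : ℂ) (hτ : ‖τ‖ = 1) (m n : Fin d) (hmn : m ≠ n)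
    (hα : Antitone α)
    -- `Fext` is the extension `F^ext` of `F`, obtained by sorting the argument:
    (hFext : ∀ x : Fin d → ℝ, ∃ σ : Equiv.Perm (Fin d),
      Antitone (x ∘ σ) ∧ Fext x = F (x ∘ σ) ∘ σ.symm)
    -- `F` is C¹ point-symmetric at `α`:
    (hsym : ∀ (x : Fin d → ℝ) (σ : Equiv.Perm (Fin d)), Fext (x ∘ σ) = Fext x ∘ σ)
    (hC1 : ContDiffAt ℝ 1 Fext α)
    (hD : HasFDerivAt Fext D α)
    -- `LF` is the matrix function `𝓛_F` determined by spectral decompositions: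
    (hLF : ∀ (B V : Matrix (Fin d) (Fin d) ℂ) (ξ : Fin d → ℝ),
      V ∈ Matrix.unitaryGroup (Fin d) ℂ → Antitone ξ →
      B = V * Matrix.diagonal (fun i => (ξ i : ℂ)) * star V →
      LF B = V * Matrix.diagonal (fun i => (F ξ i : ℂ)) * star V) :
    Tendsto
      (fun h : ℝ => (h : ℂ)⁻¹ •
        (LF (Matrix.diagonal (fun i => (α i : ℂ))
              + h • (τ • Matrix.single m n (1 : ℂ)
                    + (starRingEnd ℂ) τ • Matrix.single n m (1 : ℂ)))
          - LF (Matrix.diagonal (fun i => (α i : ℂ)))))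
      (nhdsWithin (0 : ℝ) {0}ᶜ)
      (nhds (Matrix.of fun i j => (bracket F D α i j : ℂ) *
        (τ • Matrix.single m n (1 : ℂ)
          + (starRingEnd ℂ) τ • Matrix.single n m (1 : ℂ)) i j)) := by
  classical
  have hτ1 : (starRingEnd ℂ) τ * τ = 1 := by
    rw [mul_comm, Complex.mul_conj, Complex.normSq_eq_norm_sq, hτ]
    norm_num
  rcases eq_or_ne (α m) (α n) with hab | hab
  · -- equal eigenvalues: use the swap symmetry of the derivative
    have hswap : ∀ k, D (Pi.single n 1) k = D (Pi.single m 1) (Equiv.swap m n k) := by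
      set σ := Equiv.swap m n with hσdef
      set Pσ : (Fin d → ℝ) →L[ℝ] (Fin d → ℝ) :=
        LinearMap.toContinuousLinearMap (LinearMap.funLeft ℝ ℝ (⇑σ)) with hPσ
      have hPα : Pσ α = α := by
        funext k
        show α (σ k) = α k
        rcases eq_or_ne k m with hk | hk
        · rw [hk, hσdef, Equiv.swap_apply_left]
          exact hab.symm
        · rcases eq_or_ne k n with hk' | hk'
          · rw [hk', hσdef, Equiv.swap_apply_right]
            exact hab
          · rw [hσdef, Equiv.swap_apply_of_ne_of_ne hk hk']
      have h1 : HasFDerivAt (fun x => Fext (Pσ x)) (D.comp Pσ) α := by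
        have hD2 : HasFDerivAt Fext D (Pσ α) := by rw [hPα]; exact hD
        exact hD2.comp α Pσ.hasFDerivAt
      have h2 : HasFDerivAt (fun x => Pσ (Fext x)) (Pσ.comp D) α :=
        Pσ.hasFDerivAt.comp α hD
      have hfun : (fun x : Fin d → ℝ => Fext (Pσ x)) = fun x => Pσ (Fext x) := by
        funext x
        show Fext (x ∘ ⇑σ) = Fext x ∘ ⇑σ
        exact hsym x σ
      rw [hfun] at h1
      have hDD : D.comp Pσ = Pσ.comp D := h1.unique h2
      have hsg : Pσ (Pi.single n 1) = Pi.single m 1 := by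
        funext i
        show (Pi.single n 1 : Fin d → ℝ) (σ i) = (Pi.single m 1 : Fin d → ℝ) i
        rcases eq_or_ne i m with hi | hi
        · rw [hi, hσdef, Equiv.swap_apply_left]
          simp
        · rcases eq_or_ne i n with hi' | hi'
          · rw [hi', hσdef, Equiv.swap_apply_right]
            simp [Pi.single_apply, Ne.symm hmn, hi' ▸ hi]
          · rw [hσdef, Equiv.swap_apply_of_ne_of_ne hi hi']
            simp [Pi.single_apply, hi, hi']
      have hMN : ∀ k, D (Pi.single m 1) k = D (Pi.single n 1) (σ k) := by
        intro k
        have e := congrArg (fun L : (Fin d → ℝ) →L[ℝ] (Fin d → ℝ) => L (Pi.single n 1) k) hDD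
        simp only [ContinuousLinearMap.comp_apply] at e
        rw [hsg] at e
        exact e
      intro k
      have e := hMN (σ k)
      rw [hσdef, Equiv.swap_apply_self] at e
      exact e.symm
    have h2 : ((Real.sqrt 2)⁻¹ : ℝ) ^ 2 = 1 / 2 := by
      rw [inv_pow, Real.sq_sqrt (by norm_num : (0:ℝ) ≤ 2)]
      norm_num
    refine keyLemma F Fext α LF D τ hτ1 m n hmn hα hFext hsym hD hLF
      (fun _ => (Real.sqrt 2)⁻¹) (fun _ => (Real.sqrt 2)⁻¹) 0 0
      (fun h => Function.update (Function.update α m (α m + h)) n (α m - h))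
      (fun i => if i = n then (-1 : ℝ) else if i = m then 1 else 0)
      ?_ ?_ ?_ ?_ ?_ ?_ ?_ ?_ ?_ _ ?_
    · -- Ξ 0 = α
      funext k
      by_cases hk : k = n
      · simp only [Function.update_apply, hk, eq_self_iff_true, if_true]
        rw [sub_zero]
        exact hab
      · by_cases hk' : k = m
        · simp [Function.update_apply, hk, hk']
        · simp [Function.update_apply, hk, hk']
    · -- HasDerivAt Ξ Ξd 0
      refine hasDerivAt_pi.2 fun i => ?_
      simp only [Function.update_apply]
      by_cases hi : i = n
      · simp only [hi, eq_self_iff_true, if_true]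
        exact (hasDerivAt_id 0).const_sub (α m)
      · by_cases hi' : i = m
        · simp only [hi, hi', hmn, eq_self_iff_true, if_true, if_false]
          exact (hasDerivAt_id 0).const_add (α m)
        · simp only [hi, hi', if_false]
          exact hasDerivAt_const 0 (α i)
    · exact hasDerivAt_const 0 _
    · exact hasDerivAt_const 0 _
    · -- hI
      intro h
      simp only [Function.update_apply, hmn, Ne.symm hmn, eq_self_iff_true, if_true, if_false]
      rw [h2]
      ring
    · -- hII
      intro h
      simp only [Function.update_apply, hmn, Ne.symm hmn, eq_self_iff_true, if_true, if_false]
      rw [h2, ← hab]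
      ring
    · -- hIII
      intro h
      simp only [Function.update_apply, hmn, Ne.symm hmn, eq_self_iff_true, if_true, if_false]
      have h3 : ((Real.sqrt 2)⁻¹ : ℝ) * (Real.sqrt 2)⁻¹ = 1 / 2 := by
        rw [← pow_two]
        exact h2
      rw [h3]
      ring
    · -- hIV
      intro h
      rw [h2]
      norm_num
    · -- hΞk
      intro h k hk hk'
      simp [Function.update_apply, hk, hk']
    · -- hT
      have hΞd : (fun i => if i = n then (-1 : ℝ) else if i = m then 1 else 0)
          = Pi.single m 1 - Pi.single n 1 := by
        funext i
        by_cases hi : i = n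
        · simp [hi, Pi.single_apply, Ne.symm hmn]
        · by_cases hi' : i = m
          · simp [hi, hi', Pi.single_apply, hmn]
          · simp [hi, hi', Pi.single_apply]
      have hDk : ∀ k, D (fun i => if i = n then (-1 : ℝ) else if i = m then 1 else 0) k
          = D (Pi.single m 1) k - D (Pi.single n 1) k := by
        intro k
        rw [hΞd, map_sub]
        rfl
      have e1 : D (Pi.single n 1) m = D (Pi.single m 1) n := by
        have := hswap m
        rwa [Equiv.swap_apply_left] at this
      have e2 : D (Pi.single n 1) n = D (Pi.single m 1) m := by
        have := hswap n
        rwa [Equiv.swap_apply_right] at this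
      have e3 : ∀ k, k ≠ m → k ≠ n → D (Pi.single n 1) k = D (Pi.single m 1) k := by
        intro k hk hk'
        have := hswap k
        rwa [Equiv.swap_apply_of_ne_of_ne hk hk'] at this
      have h2c : ((Real.sqrt 2 : ℝ) : ℂ)⁻¹ ^ 2 = 1 / 2 := by
        have hsq : ((Real.sqrt 2 : ℝ) : ℂ) ^ 2 = 2 := by
          exact_mod_cast congrArg (fun x : ℝ => (x : ℂ))
            (Real.sq_sqrt (by norm_num : (0:ℝ) ≤ 2))
        rw [inv_pow, hsq]
        norm_num
      beta_reduce
      ext i j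
      simp only [Matrix.of_apply, Matrix.add_apply, Matrix.smul_apply, Matrix.single,
        Matrix.diagonal_apply, smul_eq_mul]
      by_cases hi : i = m
      · by_cases hj : j = m
        · simp only [hi, hj, eq_self_iff_true, if_true, hmn, Ne.symm hmn, if_false,
            true_and, and_true, and_self, false_and, and_false]
          rw [hDk m, hDk n, e1, e2]
          push_cast
          ring
        · by_cases hj' : j = n
          · simp only [hi, hj, hj', eq_self_iff_true, if_true, hmn, Ne.symm hmn, if_false,
              true_and, and_true, and_self, false_and, and_false, bracket, if_pos hab]
            rw [hDk m, hDk n, e1, e2]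
            push_cast
            linear_combination (-2 * τ *
              ((D (Pi.single m 1) m : ℂ) - (D (Pi.single m 1) n : ℂ))) * h2c
          · simp [hi, hj, hj', hmn, Ne.symm hmn, Ne.symm hj, Ne.symm hj']
      · by_cases hi' : i = n
        · by_cases hj : j = m
          · simp only [hi, hi', hj, eq_self_iff_true, if_true, hmn, Ne.symm hmn, if_false,
              true_and, and_true, and_self, false_and, and_false, bracket, if_pos hab.symm,
              if_neg (Ne.symm hmn)]
            rw [hDk m, hDk n, e1, e2]
            push_cast
            linear_combination (-2 * (starRingEnd ℂ) τ *
              ((D (Pi.single m 1) m : ℂ) - (D (Pi.single m 1) n : ℂ))) * h2c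
          · by_cases hj' : j = n
            · simp only [hi, hi', hj, hj', eq_self_iff_true, if_true, hmn, Ne.symm hmn,
                if_false, true_and, and_true, and_self, false_and, and_false]
              rw [hDk m, hDk n, e1, e2]
              push_cast
              ring
            · simp [hi, hi', hj, hj', hmn, Ne.symm hmn, Ne.symm hj, Ne.symm hj']
        · by_cases hij : i = j
          · have hjm : ¬ j = m := fun hh => hi (hij.trans hh)
            have hjn : ¬ j = n := fun hh => hi' (hij.trans hh)
            simp only [hij, hjm, hjn, Ne.symm hjm, Ne.symm hjn, if_false,
              eq_self_iff_true, if_true, false_and, and_false]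
            rw [hDk j, e3 j hjm hjn]
            push_cast
            ring
          · simp [hi, hi', hij, Ne.symm hi, Ne.symm hi', Ne.symm hij]
  · -- distinct eigenvalues
    have hsub : α m - α n ≠ 0 := sub_ne_zero.2 hab
    have hlin : HasDerivAt (fun h : ℝ => 2 * h / (α m - α n)) (2 / (α m - α n)) 0 := by
      have := ((hasDerivAt_id (0 : ℝ)).const_mul 2).div_const (α m - α n)
      simpa using this
    have harc : HasDerivAt (fun h : ℝ => Real.arctan (2 * h / (α m - α n)))
        (2 / (α m - α n)) 0 := by
      have := hlin.arctan
      simpa using this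
    have hq : HasDerivAt (fun h : ℝ => Real.sqrt (1 + (2 * h / (α m - α n)) ^ 2)) 0 0 := by
      have hin : HasDerivAt (fun h : ℝ => 1 + (2 * h / (α m - α n)) ^ 2) 0 0 := by
        have := (hlin.pow 2).const_add 1
        simpa using this
      have := hin.sqrt (by norm_num)
      simpa using this
    refine keyLemma F Fext α LF D τ hτ1 m n hmn hα hFext hsym hD hLF
      (fun h => Real.cos (Real.arctan (2 * h / (α m - α n)) / 2))
      (fun h => Real.sin (Real.arctan (2 * h / (α m - α n)) / 2))
      0 (1 / (α m - α n))
      (fun h => Function.update (Function.update α m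
          ((α m + α n) / 2 + (α m - α n) / 2 * Real.sqrt (1 + (2 * h / (α m - α n)) ^ 2))) n
          ((α m + α n) / 2 - (α m - α n) / 2 * Real.sqrt (1 + (2 * h / (α m - α n)) ^ 2)))
      (fun _ => (0 : ℝ))
      ?_ ?_ ?_ ?_ ?_ ?_ ?_ ?_ ?_ _ ?_
    · -- Ξ 0 = α
      funext k
      by_cases hk : k = n
      · simp only [Function.update_apply, hk, eq_self_iff_true, if_true]
        rw [show (1 + (2 * (0:ℝ) / (α m - α n)) ^ 2 : ℝ) = 1 by norm_num, Real.sqrt_one]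
        ring
      · by_cases hk' : k = m
        · simp only [Function.update_apply, hk, hk', hmn, eq_self_iff_true, if_true, if_false]
          rw [show (1 + (2 * (0:ℝ) / (α m - α n)) ^ 2 : ℝ) = 1 by norm_num, Real.sqrt_one]
          ring
        · simp [Function.update_apply, hk, hk']
    · -- HasDerivAt Ξ 0 0
      refine hasDerivAt_pi.2 fun i => ?_
      simp only [Function.update_apply]
      by_cases hi : i = n
      · simp only [hi, eq_self_iff_true, if_true]
        have h5 := (hq.const_mul ((α m - α n) / 2)).const_sub ((α m + α n) / 2)
        simpa using h5
      · by_cases hi' : i = m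
        · simp only [hi, hi', hmn, eq_self_iff_true, if_true, if_false]
          have h5 := (hq.const_mul ((α m - α n) / 2)).const_add ((α m + α n) / 2)
          simpa using h5
        · simp only [hi, hi', if_false]
          exact hasDerivAt_const 0 (α i)
    · -- derivative of c
      have h5 := (harc.div_const 2).cos
      simpa [Real.arctan_zero] using h5
    · -- derivative of t
      have h5 := (harc.div_const 2).sin
      convert h5 using 1
      rw [mul_zero, zero_div, Real.arctan_zero, zero_div, Real.cos_zero, one_mul]
      field_simp
    · -- hI
      intro h
      simp only [Function.update_apply, hmn, Ne.symm hmn, eq_self_iff_true, if_true, if_false]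
      have hq0 : Real.sqrt (1 + (2 * h / (α m - α n)) ^ 2) ≠ 0 := by positivity
      have hcos : Real.cos (Real.arctan (2 * h / (α m - α n)))
          = 1 / Real.sqrt (1 + (2 * h / (α m - α n)) ^ 2) := Real.cos_arctan _
      have hc2 : Real.cos (Real.arctan (2 * h / (α m - α n)) / 2) ^ 2
          = 1 / 2 + Real.cos (Real.arctan (2 * h / (α m - α n))) / 2 := by
        rw [Real.cos_sq]
        congr 2
        ring
      have ht2 : Real.sin (Real.arctan (2 * h / (α m - α n)) / 2) ^ 2
          = 1 / 2 - Real.cos (Real.arctan (2 * h / (α m - α n))) / 2 := by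
        rw [Real.sin_sq, hc2]
        ring
      rw [hc2, ht2, hcos]
      field_simp
      ring
    · -- hII
      intro h
      simp only [Function.update_apply, hmn, Ne.symm hmn, eq_self_iff_true, if_true, if_false]
      have hq0 : Real.sqrt (1 + (2 * h / (α m - α n)) ^ 2) ≠ 0 := by positivity
      have hcos : Real.cos (Real.arctan (2 * h / (α m - α n)))
          = 1 / Real.sqrt (1 + (2 * h / (α m - α n)) ^ 2) := Real.cos_arctan _
      have hc2 : Real.cos (Real.arctan (2 * h / (α m - α n)) / 2) ^ 2
          = 1 / 2 + Real.cos (Real.arctan (2 * h / (α m - α n))) / 2 := by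
        rw [Real.cos_sq]
        congr 2
        ring
      have ht2 : Real.sin (Real.arctan (2 * h / (α m - α n)) / 2) ^ 2
          = 1 / 2 - Real.cos (Real.arctan (2 * h / (α m - α n))) / 2 := by
        rw [Real.sin_sq, hc2]
        ring
      rw [hc2, ht2, hcos]
      field_simp
      ring
    · -- hIII
      intro h
      simp only [Function.update_apply, hmn, Ne.symm hmn, eq_self_iff_true, if_true, if_false]
      have hq0 : Real.sqrt (1 + (2 * h / (α m - α n)) ^ 2) ≠ 0 := by positivity
      have hsin : Real.sin (Real.arctan (2 * h / (α m - α n)))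
          = (2 * h / (α m - α n)) / Real.sqrt (1 + (2 * h / (α m - α n)) ^ 2) :=
        Real.sin_arctan _
      have hst : Real.cos (Real.arctan (2 * h / (α m - α n)) / 2)
            * Real.sin (Real.arctan (2 * h / (α m - α n)) / 2)
          = Real.sin (Real.arctan (2 * h / (α m - α n))) / 2 := by
        have h6 := Real.sin_two_mul (Real.arctan (2 * h / (α m - α n)) / 2)
        rw [show 2 * (Real.arctan (2 * h / (α m - α n)) / 2)
            = Real.arctan (2 * h / (α m - α n)) by ring] at h6
        linarith [h6]
      rw [show ((α m + α n) / 2 + (α m - α n) / 2 * Real.sqrt (1 + (2 * h / (α m - α n)) ^ 2))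
          - ((α m + α n) / 2 - (α m - α n) / 2 * Real.sqrt (1 + (2 * h / (α m - α n)) ^ 2))
          = (α m - α n) * Real.sqrt (1 + (2 * h / (α m - α n)) ^ 2) by ring]
      rw [hst, hsin]
      field_simp
    · -- hIV
      intro h
      exact Real.cos_sq_add_sin_sq _
    · -- hΞk
      intro h k hk hk'
      simp [Function.update_apply, hk, hk']
    · -- hT
      have hD0k : ∀ k, D (fun _ : Fin d => (0 : ℝ)) k = 0 := by
        intro k
        have h0 : (fun _ : Fin d => (0 : ℝ)) = (0 : Fin d → ℝ) := rfl
        rw [h0, map_zero]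
        rfl
      have hc0 : Real.cos (Real.arctan (2 * (0:ℝ) / (α m - α n)) / 2) = 1 := by
        rw [mul_zero, zero_div, Real.arctan_zero, zero_div, Real.cos_zero]
      have ht0 : Real.sin (Real.arctan (2 * (0:ℝ) / (α m - α n)) / 2) = 0 := by
        rw [mul_zero, zero_div, Real.arctan_zero, zero_div, Real.sin_zero]
      have hdiv : (F α n - F α m) / (α n - α m) = (F α m - F α n) / (α m - α n) := by
        rw [← neg_sub (α m) (α n), ← neg_sub (F α m) (F α n), neg_div_neg_eq]
      beta_reduce
      rw [hc0, ht0]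
      ext i j
      simp only [Matrix.of_apply, Matrix.add_apply, Matrix.smul_apply, Matrix.single,
        Matrix.diagonal_apply, smul_eq_mul, hD0k]
      by_cases hi : i = m
      · by_cases hj : j = m
        · simp only [hi, hj, eq_self_iff_true, if_true, hmn, Ne.symm hmn, if_false,
            true_and, and_true, and_self, false_and, and_false]
          push_cast
          ring
        · by_cases hj' : j = n
          · simp only [hi, hj, hj', eq_self_iff_true, if_true, hmn, Ne.symm hmn, if_false,
              true_and, and_true, and_self, false_and, and_false, bracket, if_neg hab]
            push_cast
            ring
          · simp [hi, hj, hj', hmn, Ne.symm hmn, Ne.symm hj, Ne.symm hj']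
      · by_cases hi' : i = n
        · by_cases hj : j = m
          · simp only [hi, hi', hj, eq_self_iff_true, if_true, hmn, Ne.symm hmn, if_false,
              true_and, and_true, and_self, false_and, and_false, bracket,
              if_neg (Ne.symm hab)]
            rw [hdiv]
            push_cast
            ring
          · by_cases hj' : j = n
            · simp only [hi, hi', hj, hj', eq_self_iff_true, if_true, hmn, Ne.symm hmn,
                if_false, true_and, and_true, and_self, false_and, and_false]
              push_cast
              ring
            · simp [hi, hi', hj, hj', hmn, Ne.symm hmn, Ne.symm hj, Ne.symm hj']
        · by_cases hij : i = j
          · have hjm : ¬ j = m := fun hh => hi (hij.trans hh)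
            have hjn : ¬ j = n := fun hh => hi' (hij.trans hh)
            simp only [hij, hjm, hjn, Ne.symm hjm, Ne.symm hjn, if_false,
              eq_self_iff_true, if_true, false_and, and_false]
            push_cast
            ring
          · simp [hi, hi', hij, Ne.symm hi, Ne.symm hi', Ne.symm hij]
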